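/- A point a* ∈ ℝ^N is a global minimizer of the BPDN objective V if and only if for every index n the following holds: if a*_n ≠ 0 then Φ_nᵀ(y − Φa*) = λ·sign(a*_n), and if a*_n = 0 then |Φ_nᵀ(y − Φa*)| ≤ λ. -/

import Mathlib

open Matrix

/-- The BPDN objective `V(a) = (1/2)‖y − Φa‖₂² + λ‖a‖₁`. -/
noncomputable def bpdn {M N : ℕ} (Φ : Matrix (Fin M) (Fin N) ℝ)
    (y : Fin M → ℝ) (lam : ℝ) (a : Fin N → ℝ) : ℝ :=
  (1 / 2) * ∑ m, (y m - (Φ *ᵥ a) m) ^ 2 + lam * ∑ n, |a n|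

lemma bpdn_key {M N : ℕ} (Φ : Matrix (Fin M) (Fin N) ℝ) (y : Fin M → ℝ) (lam : ℝ)
    (astar a : Fin N → ℝ) :
    bpdn Φ y lam a = bpdn Φ y lam astar
      - ∑ n, (Φᵀ *ᵥ (y - Φ *ᵥ astar)) n * (a n - astar n)
      + (1/2) * ∑ m, ((Φ *ᵥ (a - astar)) m)^2
      + lam * (∑ n, |a n| - ∑ n, |astar n|) := by
  have hswap : ∑ n, (Φᵀ *ᵥ (y - Φ *ᵥ astar)) n * (a n - astar n)
      = ∑ m, (y m - (Φ *ᵥ astar) m) * ((Φ *ᵥ (a - astar)) m) := by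
    simp only [Matrix.mulVec, dotProduct, Matrix.transpose_apply, Finset.sum_mul,
      Finset.mul_sum, Pi.sub_apply]
    rw [Finset.sum_comm]
    exact Finset.sum_congr rfl fun m _ => Finset.sum_congr rfl fun n _ => by ring
  have e : ∀ m, y m - (Φ *ᵥ a) m = (y m - (Φ *ᵥ astar) m) - (Φ *ᵥ (a - astar)) m := by
    intro m; rw [Matrix.mulVec_sub]; simp only [Pi.sub_apply]; ring
  unfold bpdn
  simp only [e]
  have expand : ∑ m, ((y m - (Φ *ᵥ astar) m) - (Φ *ᵥ (a - astar)) m)^2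
      = ∑ m, (y m - (Φ *ᵥ astar) m)^2
        - 2 * ∑ m, (y m - (Φ *ᵥ astar) m) * ((Φ *ᵥ (a - astar)) m)
        + ∑ m, ((Φ *ᵥ (a - astar)) m)^2 := by
    rw [Finset.mul_sum, ← Finset.sum_sub_distrib, ← Finset.sum_add_distrib]
    exact Finset.sum_congr rfl fun m _ => by ring
  rw [expand, hswap]; ring

lemma bpdn_aux (d δ K : ℝ) (hd2 : 0 < d^2) (hδpos : 0 < δ)
    (hδ1 : δ * (K+1) ≤ 1)
    (hP : 0 ≤ -(d ^ 2 * δ) + 1 / 2 * (d ^ 2 * δ ^ 2) * K) : False := by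
  have hint : d^2*δ*(δ*(K+1)) ≤ d^2*δ := by
    have := mul_le_mul_of_nonneg_left hδ1 (mul_pos hd2 hδpos).le
    linarith [this]
  nlinarith [mul_pos (mul_pos hd2 hδpos) hδpos]

lemma bpdn_pert {M N : ℕ} (Φ : Matrix (Fin M) (Fin N) ℝ) (y : Fin M → ℝ) (lam : ℝ)
    (astar : Fin N → ℝ)
    (hmin : ∀ a : Fin N → ℝ, bpdn Φ y lam astar ≤ bpdn Φ y lam a)
    (n : Fin N) (t : ℝ) :
    0 ≤ -((Φᵀ *ᵥ (y - Φ *ᵥ astar)) n) * t + (1/2) * t^2 * (∑ m, (Φ m n)^2)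
      + lam * (|astar n + t| - |astar n|) := by
  set a : Fin N → ℝ := Function.update astar n (astar n + t) with ha
  have hdiff : a - astar = Pi.single n t := by
    funext n'
    by_cases h : n' = n
    · subst h; simp [ha]
    · simp [ha, Function.update_of_ne h, Pi.single_eq_of_ne h]
  have h1 : ∑ n', (Φᵀ *ᵥ (y - Φ *ᵥ astar)) n' * (a n' - astar n')
      = (Φᵀ *ᵥ (y - Φ *ᵥ astar)) n * t := by
    have : ∀ n', a n' - astar n' = (Pi.single n t : Fin N → ℝ) n' := fun n' =>
      congrFun hdiff n'
    simp only [this]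
    rw [Finset.sum_eq_single n]
    · simp
    · intro b _ hb; rw [Pi.single_eq_of_ne hb]; ring
    · intro h; exact absurd (Finset.mem_univ n) h
  have h2 : ∑ m, ((Φ *ᵥ (a - astar)) m)^2 = t^2 * ∑ m, (Φ m n)^2 := by
    rw [hdiff, Finset.mul_sum]
    refine Finset.sum_congr rfl fun m _ => ?_
    rw [Matrix.mulVec_single]
    simp [Matrix.col_apply]
    ring
  have h3 : ∑ n', |a n'| - ∑ n', |astar n'| = |astar n + t| - |astar n| := by
    rw [← Finset.add_sum_erase _ (fun n' => |a n'|) (Finset.mem_univ n),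
        ← Finset.add_sum_erase _ (fun n' => |astar n'|) (Finset.mem_univ n)]
    have : ∑ n' ∈ Finset.univ.erase n, |a n'| = ∑ n' ∈ Finset.univ.erase n, |astar n'| := by
      refine Finset.sum_congr rfl fun n' hn' => ?_
      rw [ha, Function.update_of_ne (Finset.ne_of_mem_erase hn')]
    rw [this]
    simp [ha]
    ring
  have := hmin a
  rw [bpdn_key Φ y lam astar a, h1, h2, h3] at this
  linarith

/-- `a*` is a global minimizer of the BPDN objective `V` iff for
every index `n`: if `a*_n ≠ 0` then `Φ_nᵀ(y − Φa*) = λ · sign(a*_n)`, and if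
`a*_n = 0` then `|Φ_nᵀ(y − Φa*)| ≤ λ`. -/
theorem stmt2 {M N : ℕ} (hM : 0 < M) (hN : 0 < N)
    (Φ : Matrix (Fin M) (Fin N) ℝ) (y : Fin M → ℝ)
    (lam : ℝ) (hlam : 0 < lam) (astar : Fin N → ℝ) :
    (∀ a : Fin N → ℝ, bpdn Φ y lam astar ≤ bpdn Φ y lam a) ↔
      (∀ n : Fin N,
        (astar n ≠ 0 →
          (Φᵀ *ᵥ (y - Φ *ᵥ astar)) n = lam * Real.sign (astar n)) ∧
        (astar n = 0 →
          |(Φᵀ *ᵥ (y - Φ *ᵥ astar)) n| ≤ lam)) := by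
  constructor
  · -- forward: minimizer ⟹ optimality conditions
    intro hmin n
    set c : ℝ := (Φᵀ *ᵥ (y - Φ *ᵥ astar)) n with hc
    set K : ℝ := ∑ m, (Φ m n)^2 with hKdef
    have hK : 0 ≤ K := Finset.sum_nonneg fun m _ => sq_nonneg _
    have P : ∀ t : ℝ, 0 ≤ -c * t + (1/2) * t^2 * K + lam * (|astar n + t| - |astar n|) :=
      fun t => bpdn_pert Φ y lam astar hmin n t
    constructor
    · -- astar n ≠ 0
      intro hz
      have habs : ∀ t : ℝ, |t| ≤ |astar n| →
          |astar n + t| - |astar n| = Real.sign (astar n) * t := by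
        intro t ht
        rcases hz.lt_or_gt with hneg | hpos
        · rw [Real.sign_of_neg hneg, abs_of_neg hneg,
            abs_of_nonpos (by rw [abs_of_neg hneg] at ht; cases abs_le.mp ht; linarith)]
          ring
        · rw [Real.sign_of_pos hpos, abs_of_pos hpos,
            abs_of_nonneg (by rw [abs_of_pos hpos] at ht; cases abs_le.mp ht; linarith)]
          ring
      set d : ℝ := lam * Real.sign (astar n) - c with hd
      by_contra hne
      have hdne : d ≠ 0 := by
        intro h0; apply hne; have : c = lam * Real.sign (astar n) := by
          have := sub_eq_zero.mp h0; linarith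
        exact this
      have hd2 : 0 < d^2 := by positivity
      have hdabs : 0 < |d| := abs_pos.mpr hdne
      have haz : 0 < |astar n| := abs_pos.mpr hz
      set δ : ℝ := min (1/(K+1)) (|astar n|/|d|) with hδdef
      have hδpos : 0 < δ := lt_min (by positivity) (by positivity)
      set t : ℝ := -d * δ with htdef
      have htabs : |t| = |d| * δ := by
        rw [htdef, abs_mul, abs_neg, abs_of_pos hδpos]
      have htle : |t| ≤ |astar n| := by
        rw [htabs]
        have h2 : δ ≤ |astar n|/|d| := min_le_right _ _
        calc |d| * δ ≤ |d| * (|astar n|/|d|) :=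
              mul_le_mul_of_nonneg_left h2 (abs_nonneg d)
          _ = |astar n| := by field_simp
      have hδ1 : δ * (K + 1) ≤ 1 := by
        have h1 : δ ≤ 1/(K+1) := min_le_left _ _
        rw [div_eq_inv_mul, mul_one] at h1
        calc δ * (K+1) ≤ (K+1)⁻¹ * (K+1) := by
              apply mul_le_mul_of_nonneg_right h1 (by linarith)
          _ = 1 := by field_simp
      have hP := P t
      rw [habs t htle] at hP
      have hexp : -c * t + (1/2) * t^2 * K + lam * (Real.sign (astar n) * t)
          = -(d^2 * δ) + (1/2) * (d^2 * δ^2) * K := by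
        rw [htdef, hd]; ring
      rw [hexp] at hP
      exact bpdn_aux d δ K hd2 hδpos hδ1 hP
    · -- astar n = 0
      intro hz
      rw [abs_le]
      have key : ∀ s : ℝ, 0 < s → c * s ≤ (1/2) * s^2 * K + lam * s ∧
          -c * s ≤ (1/2) * s^2 * K + lam * s := by
        intro s hs
        constructor
        · have := P s
          rw [hz] at this
          simp only [zero_add, abs_zero, sub_zero, abs_of_pos hs] at this
          linarith
        · have := P (-s)
          rw [hz] at this
          simp only [zero_add, abs_zero, sub_zero, abs_neg, abs_of_pos hs] at this
          nlinarith
      constructor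
      · -- -lam ≤ c
        by_contra hcon
        push_neg at hcon
        set ε : ℝ := -lam - c with hε
        have hεpos : 0 < ε := by linarith
        set s : ℝ := 2*ε/(K+1) with hs
        have hspos : 0 < s := by positivity
        have hsK : s * (K+1) = 2*ε := by rw [hs]; field_simp
        have := (key s hspos).2
        nlinarith
      · -- c ≤ lam
        by_contra hcon
        push_neg at hcon
        set ε : ℝ := c - lam with hε
        have hεpos : 0 < ε := by linarith
        set s : ℝ := 2*ε/(K+1) with hs
        have hspos : 0 < s := by positivity
        have hsK : s * (K+1) = 2*ε := by rw [hs]; field_simp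
        have := (key s hspos).1
        nlinarith
  · -- backward: optimality conditions ⟹ minimizer
    intro h a
    rw [bpdn_key Φ y lam astar a]
    set c : Fin N → ℝ := Φᵀ *ᵥ (y - Φ *ᵥ astar) with hc
    have hsq : 0 ≤ ∑ m, ((Φ *ᵥ (a - astar)) m)^2 :=
      Finset.sum_nonneg fun m _ => sq_nonneg _
    have hsub : ∑ n, c n * (a n - astar n) ≤ lam * ∑ n, |a n| - lam * ∑ n, |astar n| := by
    
      rw [Finset.mul_sum, Finset.mul_sum, ← Finset.sum_sub_distrib]
      refine Finset.sum_le_sum fun n _ => ?_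
      obtain ⟨h1, h2⟩ := h n
      have hcabs : |c n| ≤ lam := by
        by_cases hz : astar n = 0
        · exact h2 hz
        · rw [h1 hz, abs_mul, abs_of_pos hlam]
          rcases Ne.lt_or_gt hz with hneg | hpos
          · rw [Real.sign_of_neg hneg]; simp
          · rw [Real.sign_of_pos hpos]; simp
      have hcx : c n * astar n = lam * |astar n| := by
        by_cases hz : astar n = 0
        · rw [hz]; simp
        · rw [h1 hz]
          rcases Ne.lt_or_gt hz with hneg | hpos
          · rw [Real.sign_of_neg hneg, abs_of_neg hneg]; ring
          · rw [Real.sign_of_pos hpos, abs_of_pos hpos]; ring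
      have h3 : c n * a n ≤ lam * |a n| := by
        calc c n * a n ≤ |c n * a n| := le_abs_self _
          _ = |c n| * |a n| := abs_mul _ _
          _ ≤ lam * |a n| := mul_le_mul_of_nonneg_right hcabs (abs_nonneg _)
      nlinarith
    nlinarith [mul_sub lam (∑ n, |a n|) (∑ n, |astar n|)]
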